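/- Let n ≥ 2, let I ⊆ ℝ be a nondegenerate interval, and let f = (f_1,…,f_n) satisfy condition (⋆) with all f_k increasing. For (d_1,…,d_n) ∈ F(I)ⁿ let c_* := min{F^{-1}(d_1),…,F^{-1}(d_n)} and c^* := max{F^{-1}(d_1),…,F^{-1}(d_n)}, and for k = 1,…,n let α_k := (1/(n−1)) ( (n−2)(g_k(d̄) − d_k) + Σ_{j≠k} (d_j − g_j(d̄)) ), where g_j := f_j ∘ F^{-1} and d̄ := (d_1+…+d_n)/n. Then for every k = 1,…,n, f_k(c_*) + (F(c_*) − F(c^*)) ≤ α_k ≤ f_k(c^*) + (F(c^*) − F(c_*)). -/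

import Mathlib

open Finset

/-- Condition (⋆): the functions are continuous, monotone in the same sense, and
not simultaneously constant on any nondegenerate subinterval of `I`. -/
def CondStar {n : ℕ} (I : Set ℝ) (f : Fin n → ℝ → ℝ) : Prop :=
  (∀ k, ContinuousOn (f k) I) ∧
  ((∀ k, MonotoneOn (f k) I) ∨ (∀ k, AntitoneOn (f k) I)) ∧
  (∀ a b : ℝ, a ∈ I → b ∈ I → a < b →
    ∃ k, ∃ s ∈ Set.Icc a b, ∃ t ∈ Set.Icc a b, f k s ≠ f k t)

/-- `F = f₁ + ⋯ + fₙ`. -/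
noncomputable def Fsum {n : ℕ} (f : Fin n → ℝ → ℝ) : ℝ → ℝ := fun t => ∑ k, f k t

/-- The generalized quasi-arithmetic mean `M_f(x) = F⁻¹(f₁(x₁) + ⋯ + fₙ(xₙ))`. -/
noncomputable def Mf {n : ℕ} (I : Set ℝ) (f : Fin n → ℝ → ℝ) (x : Fin n → ℝ) : ℝ :=
  Function.invFunOn (Fsum f) I (∑ k, f k (x k))

/-- A mean `M` on `Iⁿ` is `σ`-balanced if for all `x ∈ Iⁿ`, with `u := M x`,
`M (M (u_{σ(1)}(x,u)), …, M (u_{σ(n)}(x,u))) = u`, where `u_k(x,t)` replaces the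
`k`-th coordinate of `x` by `t`. -/
def SigmaBalanced {n : ℕ} (I : Set ℝ) (σ : Equiv.Perm (Fin n))
    (M : (Fin n → ℝ) → ℝ) : Prop :=
  ∀ x : Fin n → ℝ, (∀ k, x k ∈ I) →
    M (fun k => M (Function.update x (σ k) (M x))) = M x

/-- `v_k(x) := M_f(u_k(x, M_f(x)))`. -/
noncomputable def vmap {n : ℕ} (I : Set ℝ) (f : Fin n → ℝ → ℝ) (k : Fin n)
    (x : Fin n → ℝ) : ℝ :=
  Mf I f (Function.update x k (Mf I f x))

/-- `α_k = (1/(n−1)) ( (n−2)(g_k(d̄) − d_k) + ∑_{j≠k} (d_j − g_j(d̄)) )`, where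
`g_j := f_j ∘ F⁻¹` and `d̄ := (d_1+⋯+d_n)/n`. -/
noncomputable def alpha {n : ℕ} (I : Set ℝ) (f : Fin n → ℝ → ℝ) (d : Fin n → ℝ)
    (k : Fin n) : ℝ :=
  (1 / ((n : ℝ) - 1)) *
    (((n : ℝ) - 2) * (f k (Function.invFunOn (Fsum f) I ((∑ j, d j) / n)) - d k) +
      ∑ j ∈ Finset.univ.erase k,
        (d j - f j (Function.invFunOn (Fsum f) I ((∑ i, d i) / n))))


/-- with all `f_k` increasing, `c_* := min_k F⁻¹(d_k)`, `c^* := max_k F⁻¹(d_k)`,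
one has `f_k(c_*) + (F(c_*) − F(c^*)) ≤ α_k ≤ f_k(c^*) + (F(c^*) − F(c_*))` for every `k`. -/
theorem stmt9 {n : ℕ} (hn : 2 ≤ n) (I : Set ℝ) (hI : I.OrdConnected)
    (hne : ∃ a ∈ I, ∃ b ∈ I, a < b)
    (f : Fin n → ℝ → ℝ) (hf : CondStar I f) (hmono : ∀ k, MonotoneOn (f k) I)
    (d : Fin n → ℝ) (hd : ∀ k, d k ∈ Fsum f '' I)
    (cs cS : ℝ)
    (hcs : cs = Finset.univ.inf' ⟨⟨0, by omega⟩, Finset.mem_univ _⟩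
      fun k => Function.invFunOn (Fsum f) I (d k))
    (hcS : cS = Finset.univ.sup' ⟨⟨0, by omega⟩, Finset.mem_univ _⟩
      fun k => Function.invFunOn (Fsum f) I (d k)) :
    ∀ k, f k cs + (Fsum f cs - Fsum f cS) ≤ alpha I f d k ∧
      alpha I f d k ≤ f k cS + (Fsum f cS - Fsum f cs) := by
  obtain ⟨hcont, -, hnc⟩ := hf
  have hFcont : ContinuousOn (Fsum f) I := by
    unfold Fsum; exact continuousOn_finset_sum Finset.univ (fun k _ => hcont k)
  have hFmono : MonotoneOn (Fsum f) I := by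
    intro a ha b hb hab
    exact Finset.sum_le_sum fun k _ => hmono k ha hb hab
  have hFsm : StrictMonoOn (Fsum f) I := by
    intro a ha b hb hab
    rcases lt_or_eq_of_le (hFmono ha hb hab.le) with h | h
    · exact h
    · exfalso
      obtain ⟨k, s, hs, t, ht, hst⟩ := hnc a b ha hb hab
      have hsub : Set.Icc a b ⊆ I := hI.out ha hb
      have hab' : ∀ j, f j a = f j b := by
        intro j
        by_contra hne0
        have hlt : f j a < f j b := lt_of_le_of_ne (hmono j ha hb hab.le) hne0
        have : Fsum f a < Fsum f b :=
          Finset.sum_lt_sum (fun i _ => hmono i ha hb hab.le) ⟨j, Finset.mem_univ j, hlt⟩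
        exact absurd h (ne_of_lt this)
      have key : ∀ u ∈ Set.Icc a b, f k u = f k a := by
        intro u hu
        have h1 : f k a ≤ f k u := hmono k ha (hsub hu) hu.1
        have h2 : f k u ≤ f k b := hmono k (hsub hu) hb hu.2
        have := hab' k
        linarith
      exact hst (by rw [key s hs, key t ht])
  set c : Fin n → ℝ := fun k => Function.invFunOn (Fsum f) I (d k) with hc
  have hck : ∀ k, c k ∈ I ∧ Fsum f (c k) = d k := by
    intro k
    obtain ⟨x, hx, hfx⟩ := hd k
    exact ⟨Function.invFunOn_mem ⟨x, hx, hfx⟩, Function.invFunOn_eq ⟨x, hx, hfx⟩⟩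
  have hne0 : (Finset.univ : Finset (Fin n)).Nonempty := ⟨⟨0, by omega⟩, Finset.mem_univ _⟩
  have hcsI : cs ∈ I := by
    obtain ⟨k, -, hk⟩ := Finset.exists_mem_eq_inf' hne0 c
    rw [hcs]; exact hk ▸ (hck k).1
  have hcSI : cS ∈ I := by
    obtain ⟨k, -, hk⟩ := Finset.exists_mem_eq_sup' hne0 c
    rw [hcS]; exact hk ▸ (hck k).1
  have hcsle : ∀ k, cs ≤ c k := fun k => by
    rw [hcs]; exact Finset.inf'_le _ (Finset.mem_univ k)
  have hlecS : ∀ k, c k ≤ cS := fun k => by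
    rw [hcS]; exact Finset.le_sup' _ (Finset.mem_univ k)
  have hFcsd : ∀ k, Fsum f cs ≤ d k := fun k => by
    rw [← (hck k).2]; exact hFmono hcsI (hck k).1 (hcsle k)
  have hdFcS : ∀ k, d k ≤ Fsum f cS := fun k => by
    rw [← (hck k).2]; exact hFmono (hck k).1 hcSI (hlecS k)
  have hcscS : cs ≤ cS := (hcsle ⟨0, by omega⟩).trans (hlecS ⟨0, by omega⟩)
  have hnpos : (0:ℝ) < n := by positivity
  set dbar : ℝ := (∑ j, d j) / n with hdbar
  have hsumd : ∑ j, d j = n * dbar := by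
    rw [hdbar]; field_simp
  have hdb1 : Fsum f cs ≤ dbar := by
    rw [hdbar, le_div_iff₀ hnpos]
    calc Fsum f cs * n = ∑ _j : Fin n, Fsum f cs := by
          simp [Finset.sum_const, Finset.card_univ, mul_comm]
      _ ≤ ∑ j, d j := Finset.sum_le_sum fun j _ => hFcsd j
  have hdb2 : dbar ≤ Fsum f cS := by
    rw [hdbar, div_le_iff₀ hnpos]
    calc ∑ j, d j ≤ ∑ _j : Fin n, Fsum f cS := Finset.sum_le_sum fun j _ => hdFcS j
      _ = Fsum f cS * n := by simp [Finset.sum_const, Finset.card_univ, mul_comm]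
  have hdbarim : dbar ∈ Fsum f '' I := by
    have h1 : Set.Icc (Fsum f cs) (Fsum f cS) ⊆ Fsum f '' Set.Icc cs cS :=
      intermediate_value_Icc hcscS (hFcont.mono (hI.out hcsI hcSI))
    exact Set.image_mono (hI.out hcsI hcSI) (h1 ⟨hdb1, hdb2⟩)
  set m : ℝ := Function.invFunOn (Fsum f) I dbar with hm
  have hmI : m ∈ I := Function.invFunOn_mem (by simpa [Set.mem_image] using hdbarim)
  have hFm : Fsum f m = dbar := Function.invFunOn_eq (by simpa [Set.mem_image] using hdbarim)
  have hcsm : cs ≤ m := by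
    by_contra h
    push_neg at h
    have := hFsm hmI hcsI h
    rw [hFm] at this; linarith
  have hmcS : m ≤ cS := by
    by_contra h
    push_neg at h
    have := hFsm hcSI hmI h
    rw [hFm] at this; linarith
  intro k
  have hN : (2:ℝ) ≤ (n:ℝ) := by exact_mod_cast hn
  have hsumfm : ∑ j, f j m = dbar := hFm
  have halpha : alpha I f d k = f k m + dbar - d k := by
    unfold alpha
    rw [← hdbar, ← hm]
    have herase : ∑ j ∈ Finset.univ.erase k, (d j - f j m)
        = (∑ j, (d j - f j m)) - (d k - f k m) :=
      Finset.sum_erase_eq_sub (Finset.mem_univ k)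
    rw [herase, Finset.sum_sub_distrib, hsumfm, hsumd]
    have hN1 : (n:ℝ) - 1 ≠ 0 := by linarith
    field_simp
    ring
  have hfk1 : f k cs ≤ f k m := hmono k hcsI hmI hcsm
  have hfk2 : f k m ≤ f k cS := hmono k hmI hcSI hmcS
  constructor
  · rw [halpha]; have := hFcsd k; have := hdFcS k; linarith
  · rw [halpha]; have := hFcsd k; have := hdFcS k; linarith
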